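/- For all integers l ≥ 0 and K ≥ 0, Σ_{α ∈ ℤ_{≥0}^{l+1}, α₀+α₁+⋯+α_l = K} ( ∏_{i=1}^{l} 𝒜_{αᵢ} ) · t^{Σ_{i=1}^{l} (i−1) αᵢ} = t^{lK} in ℤ[t] (the index α₀ enters the sum but carries weight 1). -/

import Mathlib

open Finset Polynomial

/-- `𝒜₀ = 1` and `𝒜_k = (t − 1) t^{k−1}` for `k ≥ 1`, in `ℤ[t]`. -/
noncomputable def AA (k : ℕ) : Polynomial ℤ :=
  if k = 0 then 1 else (X - 1) * X ^ (k - 1)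

/-- Splitting off the first coordinate of an antidiagonal tuple sum. -/
lemma sum_antidiagonalTuple_cons {M : Type*} [AddCommMonoid M] (n K : ℕ)
    (f : (Fin (n + 1) → ℕ) → M) :
    ∑ α ∈ Finset.Nat.antidiagonalTuple (n + 1) K, f α
      = ∑ jm ∈ Finset.HasAntidiagonal.antidiagonal K,
          ∑ β ∈ Finset.Nat.antidiagonalTuple n jm.2, f (Fin.cons jm.1 β) := by
  rw [Finset.sum_sigma']
  refine Finset.sum_nbij' (i := fun (α : Fin (n + 1) → ℕ) => ⟨(α 0, ∑ i : Fin n, α i.succ), fun i => α i.succ⟩)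
    (j := fun x => Fin.cons x.1.1 x.2) ?_ ?_ ?_ ?_ ?_
  · intro α hα
    rw [Finset.Nat.mem_antidiagonalTuple, Fin.sum_univ_succ] at hα
    simp [Finset.mem_sigma, Finset.Nat.mem_antidiagonalTuple, Finset.HasAntidiagonal.mem_antidiagonal, hα]
  · intro x hx
    simp only [Finset.mem_sigma, Finset.HasAntidiagonal.mem_antidiagonal, Finset.Nat.mem_antidiagonalTuple] at hx
    rw [Finset.Nat.mem_antidiagonalTuple, Fin.sum_univ_succ]
    simp [hx.2, hx.1]
  · intro α _
    exact Fin.cons_self_tail α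
  · intro x hx
    simp only [Finset.mem_sigma, Finset.HasAntidiagonal.mem_antidiagonal, Finset.Nat.mem_antidiagonalTuple] at hx
    refine Sigma.ext ?_ ?_
    · simp only [Fin.cons_zero, Fin.cons_succ]
      rw [hx.2]
    
    · simp [Fin.cons_succ]
  · intro α _
    exact congrArg f (Fin.cons_self_tail α).symm

/-- Telescoping sum of the `AA`s. -/
lemma sum_AA (n : ℕ) : ∑ j ∈ Finset.range (n + 1), AA j = X ^ n := by
  induction n with
  | zero => simp [AA]
  | succ n ih =>
    rw [Finset.sum_range_succ, ih, AA]
    simp only [Nat.succ_ne_zero, if_false, Nat.add_sub_cancel]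
    ring

/-- The inner sum appearing after splitting off the `α₀` coordinate. -/
noncomputable def GG (l m : ℕ) : Polynomial ℤ :=
  ∑ β ∈ Finset.Nat.antidiagonalTuple l m, ∏ i : Fin l, AA (β i) * X ^ ((i : ℕ) * β i)

lemma GG_zero_zero : GG 0 0 = 1 := by
  simp [GG]

lemma GG_zero_succ (m : ℕ) : GG 0 (m + 1) = 0 := by
  simp [GG]

lemma GG_succ (l m : ℕ) :
    GG (l + 1) m = ∑ jm ∈ Finset.HasAntidiagonal.antidiagonal m, AA jm.1 * (X ^ jm.2 * GG l jm.2) := by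
  rw [GG, sum_antidiagonalTuple_cons]
  refine Finset.sum_congr rfl fun jm _ => ?_
  simp only [GG, Finset.mul_sum]
  refine Finset.sum_congr rfl fun β hβ => ?_
  rw [Finset.Nat.mem_antidiagonalTuple] at hβ
  rw [Fin.prod_univ_succ]
  simp only [Fin.cons_zero, Fin.cons_succ, Fin.val_succ, Fin.val_zero, zero_mul, pow_zero,
    mul_one]
  have : ∀ i : Fin l, AA (β i) * X ^ (((i : ℕ) + 1) * β i)
      = (AA (β i) * X ^ ((i : ℕ) * β i)) * X ^ (β i) := by
    intro i
    rw [add_mul, one_mul, pow_add, mul_assoc]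
  rw [Finset.prod_congr rfl fun i _ => this i, Finset.prod_mul_distrib,
    Finset.prod_pow_eq_pow_sum, hβ]
  ring

lemma sum_GG (l : ℕ) : ∀ K : ℕ, ∑ m ∈ Finset.range (K + 1), GG l m = X ^ (l * K) := by
  induction l with
  | zero =>
    intro K
    rw [Finset.sum_eq_single 0]
    · simp [GG_zero_zero]
    · intro m _ hm
      obtain ⟨m, rfl⟩ := Nat.exists_eq_succ_of_ne_zero hm
      exact GG_zero_succ m
    · intro h
      exact absurd (Finset.mem_range.mpr (Nat.succ_pos K)) h
  | succ l ih =>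
    intro K
    have step1 : ∀ m : ℕ, GG (l + 1) m
        = ∑ p ∈ Finset.range (m + 1), AA (m - p) * (X ^ p * GG l p) := by
      intro m
      rw [GG_succ, Finset.Nat.sum_antidiagonal_eq_sum_range_succ_mk]
      rw [← Finset.sum_range_reflect]
      refine Finset.sum_congr rfl fun p hp => ?_
      rw [Finset.mem_range] at hp
      have h1 : m + 1 - 1 - p = m - p := by omega
      have h2 : m - (m - p) = p := by omega
      rw [h1, h2]
    calc ∑ m ∈ Finset.range (K + 1), GG (l + 1) m
        = ∑ m ∈ Finset.Ico 0 (K + 1), ∑ p ∈ Finset.Ico 0 (m + 1),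
            AA (m - p) * (X ^ p * GG l p) := by
          rw [← Finset.range_eq_Ico]
          refine Finset.sum_congr rfl fun m _ => ?_
          rw [step1 m, Finset.range_eq_Ico]
      _ = ∑ p ∈ Finset.Ico 0 (K + 1), ∑ m ∈ Finset.Ico p (K + 1),
            AA (m - p) * (X ^ p * GG l p) :=
          (Finset.sum_Ico_Ico_comm 0 (K + 1) fun p m => AA (m - p) * (X ^ p * GG l p)).symm
      _ = ∑ p ∈ Finset.range (K + 1), X ^ K * GG l p := by
          rw [← Finset.range_eq_Ico]
          refine Finset.sum_congr rfl fun p hp => ?_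
          rw [Finset.mem_range] at hp
          rw [← Finset.sum_mul, Finset.sum_Ico_eq_sum_range]
          have h3 : ∀ j, p + j - p = j := fun j => by omega
          have h4 : K + 1 - p = (K - p) + 1 := by omega
          rw [Finset.sum_congr rfl fun j _ => by rw [h3 j], h4, sum_AA]
          rw [← mul_assoc, ← pow_add]
          congr 2
          omega
      _ = X ^ ((l + 1) * K) := by
          rw [← Finset.mul_sum, ih K, ← pow_add]
          congr 1
          ring

/-- For `l ≥ 0` and `K ≥ 0`,
`Σ_{α ∈ ℤ_{≥0}^{l+1}, α₀+α₁+⋯+α_l = K} (∏_{i=1}^{l} 𝒜_{αᵢ}) · t^{Σ_{i=1}^{l}(i−1)αᵢ} = t^{lK}`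
in `ℤ[t]` (the index `α₀` enters the sum but carries weight `1`). -/
theorem crystal_sum_identity_telescoped (l K : ℕ) :
    ∑ α ∈ Finset.Nat.antidiagonalTuple (l + 1) K,
        ∏ i : Fin (l + 1),
          (if (i : ℕ) = 0 then 1 else AA (α i) * X ^ (((i : ℕ) - 1) * α i)) =
      X ^ (l * K) := by
  rw [sum_antidiagonalTuple_cons]
  have key : ∀ jm ∈ Finset.HasAntidiagonal.antidiagonal K,
      (∑ β ∈ Finset.Nat.antidiagonalTuple l jm.2, ∏ i : Fin (l + 1),
        (if (i : ℕ) = 0 then 1 else AA ((Fin.cons jm.1 β : Fin (l+1) → ℕ) i)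
          * X ^ (((i : ℕ) - 1) * (Fin.cons jm.1 β : Fin (l+1) → ℕ) i))) = GG l jm.2 := by
    intro jm _
    rw [GG]
    refine Finset.sum_congr rfl fun β _ => ?_
    rw [Fin.prod_univ_succ]
    simp only [Fin.cons_zero, Fin.cons_succ, Fin.val_succ, Fin.val_zero, if_true,
      Nat.add_sub_cancel, one_mul]
    refine Finset.prod_congr rfl fun i _ => ?_
    rw [if_neg (Nat.succ_ne_zero _)]
  rw [Finset.sum_congr rfl key, Finset.Nat.sum_antidiagonal_eq_sum_range_succ_mk,
    ← Finset.sum_range_reflect]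
  have : ∀ m ∈ Finset.range (K + 1), GG l (K - (K + 1 - 1 - m)) = GG l m := by
    intro m hm
    rw [Finset.mem_range] at hm
    congr 1
    omega
  rw [Finset.sum_congr rfl this, sum_GG]
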